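/- For complex numbers z, w with |z|² + |w|² = 1 and 3z² + 1 ≠ 0, the map f(z,w) = (2w³/(3z²+1), (z³+3z)/(3z²+1), √3(wz²−w)/(3z²+1)) satisfies |f₁|² + |f₂|² − |f₃|² = 1. -/

import Mathlib

theorem stmt_15 (z w : ℂ) (h : ‖z‖ ^ 2 + ‖w‖ ^ 2 = 1)
    (hden : 3 * z ^ 2 + 1 ≠ 0) :
    ‖2 * w ^ 3 / (3 * z ^ 2 + 1)‖ ^ 2
      + ‖(z ^ 3 + 3 * z) / (3 * z ^ 2 + 1)‖ ^ 2
      - ‖(Real.sqrt 3 : ℂ) * (w * z ^ 2 - w) / (3 * z ^ 2 + 1)‖ ^ 2 = 1 := by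
  have hC : z * (starRingEnd ℂ) z + w * (starRingEnd ℂ) w = 1 := by
    rw [Complex.mul_conj, Complex.mul_conj, ← Complex.ofReal_add, ← Complex.ofReal_one]
    congr 1
    rw [← Complex.sq_norm, ← Complex.sq_norm]
    exact h
  have key : (2 * w ^ 3) * (2 * ((starRingEnd ℂ) w) ^ 3)
      + (z ^ 3 + 3 * z) * (((starRingEnd ℂ) z) ^ 3 + 3 * (starRingEnd ℂ) z)
      - 3 * ((w * z ^ 2 - w) * ((starRingEnd ℂ) w * ((starRingEnd ℂ) z) ^ 2 - (starRingEnd ℂ) w))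
      = (3 * z ^ 2 + 1) * (3 * ((starRingEnd ℂ) z) ^ 2 + 1) := by
    linear_combination (z^2*((starRingEnd ℂ) z)^2 + 3*z^2
      - 4*z*((starRingEnd ℂ) z)*w*((starRingEnd ℂ) w) - 8*z*((starRingEnd ℂ) z)
      + 3*((starRingEnd ℂ) z)^2 + 4*w^2*((starRingEnd ℂ) w)^2
      + 4*w*((starRingEnd ℂ) w) + 1) * hC
  have hD : Complex.normSq (3 * z ^ 2 + 1) ≠ 0 := fun hx => hden (Complex.normSq_eq_zero.mp hx)
  have keyR : Complex.normSq (2 * w ^ 3) + Complex.normSq (z ^ 3 + 3 * z)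
      - Complex.normSq ((Real.sqrt 3 : ℂ) * (w * z ^ 2 - w))
      = Complex.normSq (3 * z ^ 2 + 1) := by
    have h3 : Complex.normSq ((Real.sqrt 3 : ℂ) * (w * z ^ 2 - w))
        = 3 * Complex.normSq (w * z ^ 2 - w) := by
      rw [Complex.normSq_mul, Complex.normSq_ofReal]
      rw [Real.mul_self_sqrt (by norm_num)]
    rw [h3]
    apply Complex.ofReal_injective
    push_cast
    rw [← Complex.mul_conj, ← Complex.mul_conj, ← Complex.mul_conj, ← Complex.mul_conj]
    simp only [map_mul, map_add, map_sub, map_pow, map_one, map_ofNat]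
    linear_combination key
  simp only [norm_div, div_pow, Complex.sq_norm]
  rw [← add_div, div_sub_div_same, div_eq_one_iff_eq hD]
  exact keyR
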